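/- Gronwall-type lemma with weight: Let $0<a\le b$, $\mu>0$, $\nu>0$. Let $f:[0,\infty)\to[0,\infty)$ be continuous and increasing, and $\varphi:[a,b]\to[0,\infty)$ bounded. If $\varphi(t)\le f(t)+a^{-\mu}\int_a^t (t-r)^{\nu-1}\varphi(r)\,dr$ for all $a\le t\le b$, then there exists $c>0$ such that $\varphi(t)\le c f(t)$ for all $a\le t\le b$. -/

import Mathlib

open MeasureTheory Set

private lemma aux_ker_int {ν : ℝ} (hν : 0 < ν) (t p q : ℝ) :
    IntervalIntegrable (fun r : ℝ => (t - r) ^ (ν - 1)) volume p q := by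
  have h1 : IntervalIntegrable (fun x : ℝ => x ^ (ν - 1)) volume (t - p) (t - q) :=
    intervalIntegral.intervalIntegrable_rpow' (by linarith)
  have h2 := h1.comp_sub_left t
  simpa using h2

private lemma aux_prod_int {ν : ℝ} (hν : 0 < ν) {ψ : ℝ → ℝ} (hmeas : Measurable ψ) {C : ℝ}
    (hC : ∀ x, |ψ x| ≤ C) (t p q : ℝ) :
    IntervalIntegrable (fun r : ℝ => (t - r) ^ (ν - 1) * ψ r) volume p q := by
  have hker := aux_ker_int hν t p q
  have hCb : ∃ C', ∀ x, ‖ψ x‖ ≤ C' := ⟨C, fun x => by simpa [Real.norm_eq_abs] using hC x⟩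
  constructor
  · have := hker.1.bdd_mul hmeas.aestronglyMeasurable (ae_of_all _ hCb.choose_spec)
    simp only [mul_comm] at this ⊢; exact this
  · have := hker.2.bdd_mul hmeas.aestronglyMeasurable (ae_of_all _ hCb.choose_spec)
    simp only [mul_comm] at this ⊢; exact this

private lemma aux_ker_val {ν : ℝ} (hν : 0 < ν) (t p q : ℝ) :
    ∫ r in p..q, (t - r) ^ (ν - 1) = ((t - p) ^ ν - (t - q) ^ ν) / ν := by
  have h1 := intervalIntegral.integral_comp_sub_left (fun x : ℝ => x ^ (ν - 1)) t
    (a := p) (b := q)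
  rw [h1, integral_rpow (Or.inl (by linarith))]
  have : ν - 1 + 1 = ν := by ring
  rw [this]

set_option maxHeartbeats 1600000 in
/-- Gronwall-type lemma with singular kernel and weight: let `0 < a ≤ b`, `μ, ν > 0`,
let `f : [0,∞) → [0,∞)` be continuous and increasing, and `φ : [a,b] → [0,∞)` be bounded
(and measurable).  If `φ(t) ≤ f(t) + a^(-μ) ∫ₐᵗ (t-r)^(ν-1) φ(r) dr` for all `a ≤ t ≤ b`,
then there exists `c > 0` with `φ(t) ≤ c f(t)` for all `a ≤ t ≤ b`. -/
theorem stmt11 (a b μ ν : ℝ) (ha : 0 < a) (hab : a ≤ b) (hμ : 0 < μ) (hν : 0 < ν)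
    (f : ℝ → ℝ) (hf_cont : Continuous f) (hf_mono : Monotone f)
    (hf_nonneg : ∀ t : ℝ, 0 ≤ t → 0 ≤ f t)
    (φ : ℝ → ℝ) (hφ_meas : Measurable φ)
    (hφ_nonneg : ∀ t ∈ Icc a b, 0 ≤ φ t)
    (hφ_bdd : ∃ M : ℝ, ∀ t ∈ Icc a b, φ t ≤ M)
    (h : ∀ t ∈ Icc a b, φ t ≤ f t + a ^ (-μ) * ∫ r in a..t, (t - r) ^ (ν - 1) * φ r) :
    ∃ c : ℝ, 0 < c ∧ ∀ t ∈ Icc a b, φ t ≤ c * f t := by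
  obtain ⟨M, hM⟩ := hφ_bdd
  set K : ℝ := a ^ (-μ) with hKdef
  have hK : 0 < K := Real.rpow_pos_of_pos ha _
  set M' : ℝ := max M 0 with hM'def
  set φ' : ℝ → ℝ := fun r => if r ∈ Icc a b then φ r else 0 with hφ'def
  have hφ'0 : ∀ r, 0 ≤ φ' r := by
    intro r; simp only [hφ'def]
    split_ifs with hr
    · exact hφ_nonneg r hr
    · exact le_rfl
  have hφ'M : ∀ r, φ' r ≤ M' := by
    intro r; simp only [hφ'def]
    split_ifs with hr
    · exact le_max_of_le_left (hM r hr)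
    · exact le_max_right _ _
  have hφ'abs : ∀ r, |φ' r| ≤ M' := fun r => by
    rw [abs_of_nonneg (hφ'0 r)]; exact hφ'M r
  have hφ'meas : Measurable φ' := Measurable.ite measurableSet_Icc hφ_meas measurable_const
  have hφ'eq : ∀ r ∈ Icc a b, φ' r = φ r := fun r hr => if_pos hr
  -- rewrite the hypothesis for φ'
  have h' : ∀ t ∈ Icc a b, φ' t ≤ f t + K * ∫ r in a..t, (t - r) ^ (ν - 1) * φ' r := by
    intro t ht
    have hint : (∫ r in a..t, (t - r) ^ (ν - 1) * φ' r)
        = ∫ r in a..t, (t - r) ^ (ν - 1) * φ r := by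
      apply intervalIntegral.integral_congr
      intro r hr
      rw [Set.uIcc_of_le ht.1] at hr
      simp only [hφ'eq r ⟨hr.1, hr.2.trans ht.2⟩]
    rw [hφ'eq t ht, hint]
    exact h t ht
  -- choose δ with K * δ^ν / ν = 1/2
  set δ : ℝ := (ν / (2 * K)) ^ (ν⁻¹) with hδdef
  have hδpos : 0 < δ := Real.rpow_pos_of_pos (by positivity) _
  have hδν : δ ^ ν = ν / (2 * K) :=
    Real.rpow_inv_rpow (div_nonneg hν.le (by linarith)) hν.ne'
  have hKδ : K * (δ ^ ν / ν) = 1 / 2 := by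
    have hν0 : ν ≠ 0 := hν.ne'
    have hK0 : K ≠ 0 := hK.ne'
    rw [hδν]; field_simp
  -- the constant A
  set A : ℝ := max (K * ((b - a) ^ ν / ν)) (1 / 2) with hAdef
  have hA2 : (1:ℝ)/2 ≤ A := le_max_right _ _
  have hA1 : K * ((b - a) ^ ν / ν) ≤ A := le_max_left _ _
  -- main induction
  have main : ∀ k : ℕ, ∃ c : ℝ, 1 ≤ c ∧ ∀ x ∈ Icc a b, x ≤ a + k * δ → φ' x ≤ c * f x := by
    intro k
    induction k with
    | zero =>
      refine ⟨1, le_refl 1, ?_⟩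
      intro x hx hxa
      have hxea : x = a := le_antisymm (by simpa using hxa) hx.1
      have := h' x hx
      rw [hxea] at this ⊢
      simpa [intervalIntegral.integral_same] using this
    | succ k ih =>
      obtain ⟨c, hc1, hc⟩ := ih
      set c' : ℝ := 2 * (1 + A * c) with hc'def
      have hc0 : 0 ≤ c := by linarith
      have hcc' : c ≤ c' := by nlinarith
      have hc'1 : 1 ≤ c' := by nlinarith
      refine ⟨c', hc'1, ?_⟩
      set s : ℝ := a + k * δ with hsdef
      have has : a ≤ s := by
        have : 0 ≤ (k : ℝ) * δ := by positivity
        linarith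
      intro t ht htle
      by_cases hts : t ≤ s
      · have := hc t ht hts
        have hft : 0 ≤ f t := hf_nonneg t (le_trans ha.le ht.1)
        calc φ' t ≤ c * f t := this
          _ ≤ c' * f t := by nlinarith
      push_neg at hts
      have hsb : s ≤ b := le_trans hts.le ht.2
      set u : ℝ := min (a + (k + 1 : ℕ) * δ) b with hudef
      have htu : t ≤ u := le_min htle ht.2
      have hsu : s ≤ u := le_trans hts.le htu
      have hub : u ≤ b := min_le_right _ _
      have hkc : ((k + 1 : ℕ) : ℝ) = (k : ℝ) + 1 := by push_cast; ring
      have husδ : u ≤ s + δ := by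
        have h1 : u ≤ a + ((k + 1 : ℕ) : ℝ) * δ := min_le_left _ _
        rw [hkc] at h1
        have h2 : ((k : ℝ) + 1) * δ = (k : ℝ) * δ + δ := by ring
        rw [hsdef]; linarith
      -- the sup of φ' - c' f over [s, u]
      set T : Set ℝ := (fun x => φ' x - c' * f x) '' Icc s u with hTdef
      have hTne : T.Nonempty := ⟨φ' t - c' * f t, t, ⟨hts.le, htu⟩, rfl⟩
      have hTbdd : BddAbove T := by
        refine ⟨M', ?_⟩
        rintro y ⟨x, hx, rfl⟩
        show φ' x - c' * f x ≤ M'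
        have hx0 : (0:ℝ) ≤ x := le_trans ha.le (le_trans has hx.1)
        have hfx : 0 ≤ f x := hf_nonneg x hx0
        have : 0 ≤ c' * f x := mul_nonneg (by linarith) hfx
        linarith [hφ'M x]
      set S : ℝ := sSup T with hSdef
      -- the key estimate
      have key : ∀ x ∈ Icc s u, φ' x - c' * f x ≤ max S 0 / 2 := by
        intro x hx
        have hax : a ≤ x := le_trans has hx.1
        have hxb : x ≤ b := le_trans hx.2 hub
        have hxab : x ∈ Icc a b := ⟨hax, hxb⟩
        have hx0 : (0:ℝ) ≤ x := le_trans ha.le hax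
        have hfx : 0 ≤ f x := hf_nonneg x hx0
        have hsx : s ≤ x := hx.1
        have hmS : 0 ≤ max S 0 := le_max_right _ _
        -- integrability
        have int1 : IntervalIntegrable (fun r : ℝ => (x - r) ^ (ν - 1) * φ' r) volume a s :=
          aux_prod_int hν hφ'meas hφ'abs x a s
        have int2 : IntervalIntegrable (fun r : ℝ => (x - r) ^ (ν - 1) * φ' r) volume s x :=
          aux_prod_int hν hφ'meas hφ'abs x s x
        -- split the integral
        have hsplit : (∫ r in a..x, (x - r) ^ (ν - 1) * φ' r)
            = (∫ r in a..s, (x - r) ^ (ν - 1) * φ' r)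
              + ∫ r in s..x, (x - r) ^ (ν - 1) * φ' r :=
          (intervalIntegral.integral_add_adjacent_intervals int1 int2).symm
        -- bound the first integral
        have hbd1 : (∫ r in a..s, (x - r) ^ (ν - 1) * φ' r)
            ≤ (((x - a) ^ ν - (x - s) ^ ν) / ν) * (c * f x) := by
          have hmono : (∫ r in a..s, (x - r) ^ (ν - 1) * φ' r)
              ≤ ∫ r in a..s, (x - r) ^ (ν - 1) * (c * f x) := by
            apply intervalIntegral.integral_mono_on has int1
              ((aux_ker_int hν x a s).mul_const _)
            intro r hr
            have hker0 : (0:ℝ) ≤ (x - r) ^ (ν - 1) :=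
              Real.rpow_nonneg (by linarith [hr.2, hsx]) _
            have hφr : φ' r ≤ c * f r := hc r ⟨hr.1, le_trans hr.2 hsb⟩ hr.2
            have hfr : f r ≤ f x := hf_mono (le_trans hr.2 hsx)
            have : φ' r ≤ c * f x := le_trans hφr (by nlinarith)
            exact mul_le_mul_of_nonneg_left this hker0
          rw [intervalIntegral.integral_mul_const, aux_ker_val hν x a s] at hmono
          exact hmono
        -- bound the second integral
        have hbd2 : (∫ r in s..x, (x - r) ^ (ν - 1) * φ' r)
            ≤ ((x - s) ^ ν / ν) * (c' * f x + max S 0) := by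
          have hmono : (∫ r in s..x, (x - r) ^ (ν - 1) * φ' r)
              ≤ ∫ r in s..x, (x - r) ^ (ν - 1) * (c' * f x + max S 0) := by
            apply intervalIntegral.integral_mono_on hsx int2
              ((aux_ker_int hν x s x).mul_const _)
            intro r hr
            have hker0 : (0:ℝ) ≤ (x - r) ^ (ν - 1) :=
              Real.rpow_nonneg (by linarith [hr.2]) _
            have hrT : φ' r - c' * f r ≤ S :=
              le_csSup hTbdd ⟨r, ⟨hr.1, le_trans hr.2 hx.2⟩, rfl⟩
            have hfr : f r ≤ f x := hf_mono hr.2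
            have hfr0 : 0 ≤ f r := hf_nonneg r (by linarith [hr.1, ha.le, has])
            have : φ' r ≤ c' * f x + max S 0 := by
              have h1 : c' * f r ≤ c' * f x := by nlinarith
              have h2 : S ≤ max S 0 := le_max_left _ _
              linarith
            exact mul_le_mul_of_nonneg_left this hker0
          have hval : (∫ r in s..x, (x - r) ^ (ν - 1)) = (x - s) ^ ν / ν := by
            rw [aux_ker_val hν x s x]
            rw [sub_self, Real.zero_rpow hν.ne']
            ring
          rw [intervalIntegral.integral_mul_const, hval] at hmono
          exact hmono
        -- combine
        have hbase := h' x hxab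
        rw [hsplit] at hbase
        -- K * (first integral) ≤ A * (c * f x)
        have he1 : 0 ≤ c * f x := mul_nonneg hc0 hfx
        have hr1 : K * (((x - a) ^ ν - (x - s) ^ ν) / ν) ≤ A := by
          have hxa : (x - a) ^ ν ≤ (b - a) ^ ν :=
            Real.rpow_le_rpow (by linarith) (by linarith) hν.le
          have hxs0 : (0:ℝ) ≤ (x - s) ^ ν := Real.rpow_nonneg (by linarith) _
          have hfrac : ((x - a) ^ ν - (x - s) ^ ν) / ν ≤ (b - a) ^ ν / ν := by
            apply div_le_div_of_nonneg_right ?_ hν.le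
            linarith
          calc K * (((x - a) ^ ν - (x - s) ^ ν) / ν)
              ≤ K * ((b - a) ^ ν / ν) := by nlinarith
            _ ≤ A := hA1
        have hKI1 : K * (∫ r in a..s, (x - r) ^ (ν - 1) * φ' r) ≤ A * (c * f x) := by
          calc K * (∫ r in a..s, (x - r) ^ (ν - 1) * φ' r)
              ≤ K * ((((x - a) ^ ν - (x - s) ^ ν) / ν) * (c * f x)) :=
                mul_le_mul_of_nonneg_left hbd1 hK.le
            _ = (K * (((x - a) ^ ν - (x - s) ^ ν) / ν)) * (c * f x) := by ring
            _ ≤ A * (c * f x) := mul_le_mul_of_nonneg_right hr1 he1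
        -- K * (second integral) ≤ (1/2) * (c' * f x + max S 0)
        have he2 : 0 ≤ c' * f x + max S 0 :=
          add_nonneg (mul_nonneg (by linarith) hfx) hmS
        have hr2 : K * ((x - s) ^ ν / ν) ≤ 1 / 2 := by
          have hxsδ : (x - s) ^ ν ≤ δ ^ ν :=
            Real.rpow_le_rpow (by linarith) (by linarith [hx.2, husδ]) hν.le
          have : K * ((x - s) ^ ν / ν) ≤ K * (δ ^ ν / ν) := by
            apply mul_le_mul_of_nonneg_left ?_ hK.le
            apply div_le_div_of_nonneg_right hxsδ hν.le
          linarith [hKδ]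
        have hKI2 : K * (∫ r in s..x, (x - r) ^ (ν - 1) * φ' r)
            ≤ (1 / 2) * (c' * f x + max S 0) := by
          calc K * (∫ r in s..x, (x - r) ^ (ν - 1) * φ' r)
              ≤ K * (((x - s) ^ ν / ν) * (c' * f x + max S 0)) :=
                mul_le_mul_of_nonneg_left hbd2 hK.le
            _ = (K * ((x - s) ^ ν / ν)) * (c' * f x + max S 0) := by ring
            _ ≤ (1 / 2) * (c' * f x + max S 0) := mul_le_mul_of_nonneg_right hr2 he2
        have hc'fx : c' * f x = 2 * f x + 2 * (A * (c * f x)) := by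
          rw [hc'def]; ring
        linarith
      -- conclude S ≤ 0
      have hSle : S ≤ max S 0 / 2 := by
        apply csSup_le hTne
        rintro y ⟨x, hx, rfl⟩
        exact key x hx
      have hS0 : S ≤ 0 := by
        rcases le_or_gt S 0 with h0 | h0
        · exact h0
        · have : max S 0 = S := max_eq_left h0.le
          rw [this] at hSle; linarith
      have hmax0 : max S 0 = 0 := max_eq_right hS0
      have := key t ⟨hts.le, htu⟩
      rw [hmax0] at this
      linarith
  -- choose n with b ≤ a + n * δ
  obtain ⟨n, hn⟩ := exists_nat_ge ((b - a) / δ)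
  have hbn : b ≤ a + n * δ := by
    have : b - a ≤ n * δ := by
      rw [div_le_iff₀ hδpos] at hn
      linarith
    linarith
  obtain ⟨c, hc1, hc⟩ := main n
  refine ⟨c, by linarith, ?_⟩
  intro t ht
  rw [← hφ'eq t ht]
  exact hc t ht (le_trans ht.2 hbn)
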